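/- In the exponential graph $K_m^{K_n}$ with $m < n$, the subgraph induced by constant maps is isomorphic to $K_m$, and $K_m^{K_n}$ folds onto this subgraph; consequently the neighborhood complex $\mathcal{N}(K_m^{K_n})$ is homotopy equivalent to the boundary of the $(m-1)$-simplex, i.e., to $S^{m-2}$. -/

import Mathlib

/-- Adjacency in the exponential graph `K_m^{K_n}`. -/
def ExpAdj (n m : ℕ) (f g : Fin n → Fin m) : Prop :=
  ∀ i j : Fin n, i ≠ j → f i ≠ g j

/-- Geometric realization of an abstract simplicial complex with vertex set `V`. -/
def Realization {V : Type*} (K : Finset V → Prop) : Type _ :=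
  {w : V → ℝ // (∀ v, 0 ≤ w v) ∧ (∑ᶠ v, w v) = 1 ∧
    ∃ σ : Finset V, K σ ∧ ∀ v, w v ≠ 0 → v ∈ σ}

instance {V : Type*} (K : Finset V → Prop) : TopologicalSpace (Realization K) :=
  instTopologicalSpaceSubtype

/-- Faces of the neighborhood complex `𝒩(K_m^{K_n})`. -/
def NFace (n m : ℕ) (σ : Finset (Fin n → Fin m)) : Prop :=
  ∃ h : Fin n → Fin m, ∀ f ∈ σ, ExpAdj n m f h

/-- Faces of the boundary of the (m-1)-simplex. -/
def BdFace (m : ℕ) (σ : Finset (Fin m)) : Prop := ∃ x : Fin m, x ∉ σ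

lemma exists_cval {n m : ℕ} (hmn : m < n) (f : Fin n → Fin m) :
    ∃ x : Fin m, ∃ i j : Fin n, i ≠ j ∧ f i = x ∧ f j = x := by
  obtain ⟨i, j, hij, h⟩ := Fintype.exists_ne_map_eq_of_card_lt f (by simpa using hmn)
  exact ⟨f j, i, j, hij, h, rfl⟩

noncomputable def cval {n m : ℕ} (hmn : m < n) (f : Fin n → Fin m) : Fin m :=
  (exists_cval hmn f).choose

lemma cval_spec {n m : ℕ} (hmn : m < n) (f : Fin n → Fin m) :
    ∃ i j : Fin n, i ≠ j ∧ f i = cval hmn f ∧ f j = cval hmn f :=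
  (exists_cval hmn f).choose_spec

lemma cval_const {n m : ℕ} (hmn : m < n) (x : Fin m) :
    cval hmn (fun _ => x) = x := by
  obtain ⟨i, j, _, h1, _⟩ := cval_spec hmn (fun _ => x)
  exact h1.symm

lemma expAdj_const_left {n m : ℕ} (hn : 2 ≤ n) (x : Fin m) (g : Fin n → Fin m) :
    ExpAdj n m (fun _ => x) g ↔ ∀ j, g j ≠ x := by
  constructor
  · intro h j
    haveI : Nontrivial (Fin n) := Fin.nontrivial_iff_two_le.mpr hn
    obtain ⟨i, hi⟩ := exists_ne j
    exact (h i j hi).symm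
  · intro h i j _ he
    exact h j he.symm

lemma fold_adj {n m : ℕ} (hmn : m < n) {f g : Fin n → Fin m}
    (hfg : ExpAdj n m f g) : ExpAdj n m (fun _ => cval hmn f) g := by
  intro i j hij he
  obtain ⟨a, b, hab, ha, hb⟩ := cval_spec hmn f
  rcases eq_or_ne a j with rfl | haj
  · exact hfg b a hab.symm (hb.trans he)
  · exact hfg a j haj (ha.trans he)

section Fold

variable {n m : ℕ}

noncomputable def Pmap (hmn : m < n) (w : (Fin n → Fin m) → ℝ) : Fin m → ℝ :=
  fun x => ∑ f ∈ Finset.univ.filter (fun f => cval hmn f = x), w f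

noncomputable def Jmap (u : Fin m → ℝ) : (Fin n → Fin m) → ℝ :=
  fun f => ∑ x ∈ Finset.univ.filter (fun x => (fun _ : Fin n => x) = f), u x

lemma sum_Pmap (hmn : m < n) (w : (Fin n → Fin m) → ℝ) :
    ∑ x, Pmap hmn w x = ∑ f, w f :=
  Finset.sum_fiberwise _ _ _

lemma sum_Jmap (u : Fin m → ℝ) : ∑ f : Fin n → Fin m, Jmap u f = ∑ x, u x :=
  Finset.sum_fiberwise _ _ _

lemma Pmap_nonneg (hmn : m < n) {w : (Fin n → Fin m) → ℝ} (hw : ∀ f, 0 ≤ w f)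
    (x : Fin m) : 0 ≤ Pmap hmn w x :=
  Finset.sum_nonneg fun f _ => hw f

lemma Jmap_nonneg {u : Fin m → ℝ} (hu : ∀ x, 0 ≤ u x) (f : Fin n → Fin m) :
    0 ≤ Jmap u f :=
  Finset.sum_nonneg fun x _ => hu x

lemma Pmap_ne_zero (hmn : m < n) {w : (Fin n → Fin m) → ℝ} {x : Fin m}
    (h : Pmap hmn w x ≠ 0) : ∃ f, cval hmn f = x ∧ w f ≠ 0 := by
  obtain ⟨f, hf, hf0⟩ := Finset.exists_ne_zero_of_sum_ne_zero h
  exact ⟨f, (Finset.mem_filter.mp hf).2, hf0⟩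

lemma Jmap_ne_zero {u : Fin m → ℝ} {f : Fin n → Fin m}
    (h : Jmap u f ≠ 0) : ∃ x, (fun _ : Fin n => x) = f ∧ u x ≠ 0 := by
  obtain ⟨x, hx, hx0⟩ := Finset.exists_ne_zero_of_sum_ne_zero h
  exact ⟨x, (Finset.mem_filter.mp hx).2, hx0⟩

lemma Jmap_const (hn : 0 < n) (u : Fin m → ℝ) (x : Fin m) :
    Jmap (n := n) u (fun _ => x) = u x := by
  apply Finset.sum_eq_single_of_mem
  · simp
  · intro y hy hyx
    exact absurd (congrFun (Finset.mem_filter.mp hy).2 ⟨0, hn⟩) hyx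

lemma Pmap_Jmap (hmn : m < n) (hn : 0 < n) (u : Fin m → ℝ) (x : Fin m) :
    Pmap hmn (Jmap u) x = u x := by
  rw [show u x = Jmap (n := n) u (fun _ => x) from (Jmap_const hn u x).symm]
  apply Finset.sum_eq_single_of_mem
  · simp [cval_const]
  · intro f hf hfx
    by_contra h0
    obtain ⟨y, hy, -⟩ := Jmap_ne_zero h0
    have : y = x := by
      rw [← (Finset.mem_filter.mp hf).2, ← hy, cval_const]
    exact hfx (hy ▸ this ▸ rfl)

end Fold

section Real1

variable {n m : ℕ}

lemma sum_of_real {V : Type*} [Fintype V] {K : Finset V → Prop}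
    (w : Realization K) : ∑ v, w.1 v = 1 := by
  have := w.2.2.1
  rwa [finsum_eq_sum_of_fintype] at this

noncomputable def Pc (hmn : m < n) (hn : 2 ≤ n) :
    C(Realization (NFace n m), Realization (BdFace m)) := by
  refine ⟨fun w => ⟨Pmap hmn w.1, ?_, ?_, ?_⟩, ?_⟩
  · exact fun x => Pmap_nonneg hmn w.2.1 x
  · rw [finsum_eq_sum_of_fintype, sum_Pmap, sum_of_real w]
  · obtain ⟨σ, ⟨h, hσ⟩, hsupp⟩ := w.2.2.2
    refine ⟨σ.image (cval hmn), ⟨h ⟨0, by omega⟩, ?_⟩, ?_⟩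
    · intro hmem
      obtain ⟨f, hfσ, hfc⟩ := Finset.mem_image.mp hmem
      have := (expAdj_const_left hn (cval hmn f) h).mp (fold_adj hmn (hσ f hfσ))
      exact this ⟨0, by omega⟩ hfc.symm
    · intro x hx
      obtain ⟨f, hfc, hf0⟩ := Pmap_ne_zero hmn hx
      exact Finset.mem_image.mpr ⟨f, hsupp f hf0, hfc⟩
  · exact Continuous.subtype_mk (continuous_pi fun x => continuous_finset_sum _
      fun f _ => (continuous_apply f).comp continuous_subtype_val) _

noncomputable def Jc (hmn : m < n) (hn : 2 ≤ n) :
    C(Realization (BdFace m), Realization (NFace n m)) := by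
  refine ⟨fun u => ⟨Jmap u.1, ?_, ?_, ?_⟩, ?_⟩
  · exact fun f => Jmap_nonneg u.2.1 f
  · rw [finsum_eq_sum_of_fintype, sum_Jmap, sum_of_real u]
  · obtain ⟨σ, ⟨x₀, hx₀⟩, hsupp⟩ := u.2.2.2
    refine ⟨σ.image (fun x => (fun _ : Fin n => x)), ⟨fun _ => x₀, ?_⟩, ?_⟩
    · intro f hf
      obtain ⟨x, hxσ, rfl⟩ := Finset.mem_image.mp hf
      intro i j _ he
      have hxx : x = x₀ := he
      exact hx₀ (hxx ▸ hxσ)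
    · intro f hf
      obtain ⟨x, hxf, hx0⟩ := Jmap_ne_zero hf
      exact Finset.mem_image.mpr ⟨x, hsupp x hx0, hxf⟩
  · exact Continuous.subtype_mk (continuous_pi fun f => continuous_finset_sum _
      fun x _ => (continuous_apply x).comp continuous_subtype_val) _

noncomputable def foldHomotopy (hmn : m < n) (hn : 2 ≤ n) :
    ContinuousMap.Homotopy ((Jc hmn hn).comp (Pc hmn hn))
      (ContinuousMap.id (Realization (NFace n m))) := by
  refine ⟨⟨fun p => ⟨fun f => (1 - p.1.1) * Jmap (Pmap hmn p.2.1) f + p.1.1 * p.2.1 f,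
      ?_, ?_, ?_⟩, ?_⟩, ?_, ?_⟩
  · intro f
    have h1 : (0:ℝ) ≤ 1 - p.1.1 := by have := p.1.2.2; linarith
    exact add_nonneg (mul_nonneg h1 (Jmap_nonneg (Pmap_nonneg hmn p.2.2.1) f))
      (mul_nonneg p.1.2.1 (p.2.2.1 f))
  · rw [finsum_eq_sum_of_fintype, Finset.sum_add_distrib, ← Finset.mul_sum,
      ← Finset.mul_sum, sum_Jmap, sum_Pmap, sum_of_real p.2]
    ring
  · obtain ⟨σ, ⟨h, hσ⟩, hsupp⟩ := p.2.2.2.2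
    refine ⟨σ ∪ σ.image (fun f => (fun _ : Fin n => cval hmn f)), ⟨h, ?_⟩, ?_⟩
    · intro f hf
      rcases Finset.mem_union.mp hf with hf | hf
      · exact hσ f hf
      · obtain ⟨f', hf'σ, rfl⟩ := Finset.mem_image.mp hf
        exact fold_adj hmn (hσ f' hf'σ)
    · intro f hf
      by_cases hw : p.2.1 f ≠ 0
      · exact Finset.mem_union_left _ (hsupp f hw)
      · push_neg at hw
        have hj : Jmap (Pmap hmn p.2.1) f ≠ 0 := by
          intro h0
          apply hf
          simp [h0, hw]
        obtain ⟨x, hxf, hx0⟩ := Jmap_ne_zero hj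
        obtain ⟨f', hf'c, hf'0⟩ := Pmap_ne_zero hmn hx0
        refine Finset.mem_union_right _ (Finset.mem_image.mpr ⟨f', hsupp f' hf'0, ?_⟩)
        rw [hf'c]
        exact hxf
  · apply Continuous.subtype_mk
    refine continuous_pi fun f => Continuous.add (Continuous.mul ?_ ?_) (Continuous.mul ?_ ?_)
    · exact Continuous.sub continuous_const (continuous_subtype_val.comp continuous_fst)
    · exact continuous_finset_sum _ fun x _ => continuous_finset_sum _
        fun f' _ => (continuous_apply f').comp (continuous_subtype_val.comp continuous_snd)
    · exact continuous_subtype_val.comp continuous_fst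
    · exact (continuous_apply f).comp (continuous_subtype_val.comp continuous_snd)
  · intro w
    apply Subtype.ext
    funext f
    show (1 - (0:ℝ)) * _ + (0:ℝ) * _ = _
    ring_nf
    rfl
  · intro w
    apply Subtype.ext
    funext f
    show (1 - (1:ℝ)) * _ + (1:ℝ) * _ = _
    ring_nf
    rfl

noncomputable def foldHE (hmn : m < n) (hn : 2 ≤ n) :
    ContinuousMap.HomotopyEquiv (Realization (NFace n m)) (Realization (BdFace m)) where
  toFun := Pc hmn hn
  invFun := Jc hmn hn
  left_inv := ⟨foldHomotopy hmn hn⟩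
  right_inv := by
    have : (Pc hmn hn).comp (Jc hmn hn) = ContinuousMap.id _ := by
      apply ContinuousMap.ext
      intro u
      apply Subtype.ext
      funext x
      exact Pmap_Jmap hmn (by omega) u.1 x
    rw [this]

end Real1

section Geo

variable {k : ℕ}

noncomputable def bvec (k : ℕ) : Fin (k+1) → ℝ := fun _ => ((k:ℝ)+1)⁻¹

def TmapF (k : ℕ) (v : Fin (k+1) → ℝ) : Fin k → ℝ :=
  fun i => v i.castSucc - v (Fin.last k)

noncomputable def SmapF (k : ℕ) (y : Fin k → ℝ) : Fin (k+1) → ℝ :=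
  fun j => (if h : j ≠ Fin.last k then y (j.castPred h) else 0) - (∑ i, y i) / ((k:ℝ)+1)

lemma kr_pos (k : ℕ) : (0:ℝ) < (k:ℝ)+1 := by positivity

lemma sum_TmapF (v : Fin (k+1) → ℝ) (hv : ∑ j, v j = 0) :
    ∑ i, TmapF k v i = -(((k:ℝ)+1) * v (Fin.last k)) := by
  unfold TmapF
  have h1 : ∑ i : Fin k, v i.castSucc = ∑ j, v j - v (Fin.last k) := by
    rw [Fin.sum_univ_castSucc (f := v)]; ring
  rw [Finset.sum_sub_distrib, h1, hv, Finset.sum_const, Finset.card_univ,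
    Fintype.card_fin, nsmul_eq_mul]
  ring

lemma TmapF_SmapF (y : Fin k → ℝ) : TmapF k (SmapF k y) = y := by
  funext i
  unfold TmapF SmapF
  rw [dif_pos (Fin.castSucc_lt_last i).ne, dif_neg (not_not_intro rfl),
    Fin.castPred_castSucc]
  ring

lemma sum_SmapF (y : Fin k → ℝ) : ∑ j, SmapF k y j = 0 := by
  unfold SmapF
  rw [Finset.sum_sub_distrib, Fin.sum_univ_castSucc
    (f := fun j : Fin (k+1) => if h : j ≠ Fin.last k then y (j.castPred h) else 0)]
  have h1 : ∑ i : Fin k,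
      (if h : (Fin.castSucc i) ≠ Fin.last k then y ((Fin.castSucc i).castPred h) else 0)
      = ∑ i, y i :=
    Finset.sum_congr rfl fun i _ => by
      rw [dif_pos (Fin.castSucc_lt_last i).ne, Fin.castPred_castSucc]
  rw [h1, dif_neg (not_not_intro rfl), Finset.sum_const, Finset.card_univ,
    Fintype.card_fin, nsmul_eq_mul]
  have : (0:ℝ) < (k:ℝ)+1 := kr_pos k
  field_simp
  push_cast
  ring

lemma SmapF_TmapF (v : Fin (k+1) → ℝ) (hv : ∑ j, v j = 0) : SmapF k (TmapF k v) = v := by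
  have hk0 : ((k:ℝ)+1) ≠ 0 := (kr_pos k).ne'
  funext j
  unfold SmapF
  rw [sum_TmapF v hv]
  by_cases h : j = Fin.last k
  · subst h
    rw [dif_neg (not_not_intro rfl)]
    field_simp
    ring
  · rw [dif_pos h]
    show TmapF k v (j.castPred h) - _ = _
    unfold TmapF
    rw [Fin.castSucc_castPred]
    field_simp
    ring

lemma TmapF_zero : TmapF k (0 : Fin (k+1) → ℝ) = 0 := by
  funext i; simp [TmapF]

lemma TmapF_smul (c : ℝ) (v : Fin (k+1) → ℝ) : TmapF k (c • v) = c • TmapF k v := by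
  funext i
  show c * v _ - c * v _ = c * (v _ - v _)
  ring

lemma SmapF_smul (c : ℝ) (y : Fin k → ℝ) : SmapF k (c • y) = c • SmapF k y := by
  funext j
  show (if h : j ≠ Fin.last k then c * y (j.castPred h) else 0) - (∑ i, c * y i) / ((k:ℝ)+1)
    = c * ((if h : j ≠ Fin.last k then y (j.castPred h) else 0) - (∑ i, y i) / ((k:ℝ)+1))
  rw [← Finset.mul_sum]
  by_cases h : j = Fin.last k
  · rw [dif_neg (not_not_intro h), dif_neg (not_not_intro h)]; ring
  · rw [dif_pos h, dif_pos h]; ring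

lemma TmapF_eq_zero {v : Fin (k+1) → ℝ} (hv : ∑ j, v j = 0)
    (h : TmapF k v = 0) : v = 0 := by
  have hc : ∀ j, v j = v (Fin.last k) := by
    intro j
    by_cases hj : j = Fin.last k
    · rw [hj]
    · have h2 := congrFun h (j.castPred hj)
      show v j = _
      rw [← Fin.castSucc_castPred j hj]
      have : TmapF k v (j.castPred hj) = v (j.castPred hj).castSucc - v (Fin.last k) := rfl
      rw [this] at h2
      have h0 : (0 : Fin k → ℝ) (j.castPred hj) = 0 := rfl
      rw [h0] at h2
      linarith
  have hsum2 : ∑ j : Fin (k+1), v j = ((k:ℝ)+1) * v (Fin.last k) := by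
    rw [Finset.sum_congr rfl (fun j _ => hc j), Finset.sum_const, Finset.card_univ,
      Fintype.card_fin, nsmul_eq_mul]
    push_cast
    ring
  have hlast : v (Fin.last k) = 0 := by
    have := hsum2.symm.trans hv
    have hk0 : ((k:ℝ)+1) ≠ 0 := (kr_pos k).ne'
    exact (mul_eq_zero.mp this).resolve_left hk0
  funext j
  rw [hc j, hlast]
  rfl

noncomputable def Mval (w : Fin (k+1) → ℝ) : ℝ :=
  Finset.univ.sup' Finset.univ_nonempty (fun j => -w j)

lemma le_Mval (w : Fin (k+1) → ℝ) (j : Fin (k+1)) : -w j ≤ Mval w :=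
  Finset.le_sup' (fun j => -w j) (Finset.mem_univ j)

lemma exists_Mval (w : Fin (k+1) → ℝ) : ∃ j, Mval w = -w j := by
  obtain ⟨j, -, h⟩ := Finset.exists_mem_eq_sup' (Finset.univ_nonempty) (fun j => -w j)
  exact ⟨j, h⟩

lemma Mval_pos {w : Fin (k+1) → ℝ} (hsum : ∑ j, w j = 0) (hw : w ≠ 0) : 0 < Mval w := by
  by_contra h
  push_neg at h
  have hnn : ∀ j ∈ Finset.univ, 0 ≤ w j := fun j _ => by
    have := le_Mval w j; linarith
  have h0 := (Finset.sum_eq_zero_iff_of_nonneg hnn).mp hsum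
  exact hw (funext fun j => h0 j (Finset.mem_univ j))

lemma Mval_smul {c : ℝ} (hc : 0 ≤ c) (w : Fin (k+1) → ℝ) : Mval (c • w) = c * Mval w := by
  apply le_antisymm
  · apply Finset.sup'_le
    intro j _
    show -(c * w j) ≤ c * Mval w
    have := le_Mval w j
    nlinarith
  · obtain ⟨j, hj⟩ := exists_Mval w
    rw [hj]
    have : c * -w j = -((c • w) j) := by show c * -w j = -(c * w j); ring
    rw [this]
    exact le_Mval (c • w) j

lemma Mval_sub_bvec {u : Fin (k+1) → ℝ} (hpos : ∀ j, 0 ≤ u j) (hz : ∃ j, u j = 0) :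
    Mval (u - bvec k) = ((k:ℝ)+1)⁻¹ := by
  apply le_antisymm
  · apply Finset.sup'_le
    intro j _
    show -(u j - ((k:ℝ)+1)⁻¹) ≤ ((k:ℝ)+1)⁻¹
    have := hpos j
    linarith
  · obtain ⟨j, hj⟩ := hz
    have h := le_Mval (u - bvec k) j
    have : -((u - bvec k) j) = ((k:ℝ)+1)⁻¹ := by
      show -(u j - ((k:ℝ)+1)⁻¹) = _
      rw [hj]; ring
    linarith

end Geo

section PhiPsi

variable {k : ℕ}

def toE (k : ℕ) (v : Fin k → ℝ) : EuclideanSpace ℝ (Fin k) := WithLp.toLp 2 v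

lemma toE_eq_zero {k : ℕ} {v : Fin k → ℝ} (h : toE k v = 0) : v = 0 := congrArg WithLp.ofLp h

lemma toE_smul (k : ℕ) (c : ℝ) (v : Fin k → ℝ) : toE k (c • v) = c • toE k v := rfl

noncomputable def PhiF (k : ℕ) (u : Fin (k+1) → ℝ) : EuclideanSpace ℝ (Fin k) :=
  ‖toE k (TmapF k (u - bvec k))‖⁻¹ • toE k (TmapF k (u - bvec k))

noncomputable def PsiF (k : ℕ) (y : Fin k → ℝ) : Fin (k+1) → ℝ :=
  fun j => ((k:ℝ)+1)⁻¹ + SmapF k y j / (((k:ℝ)+1) * Mval (SmapF k y))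

lemma sub_bvec_sum {u : Fin (k+1) → ℝ} (hsum : ∑ j, u j = 1) :
    ∑ j, (u - bvec k) j = 0 := by
  have : ∀ j, (u - bvec k) j = u j - ((k:ℝ)+1)⁻¹ := fun j => rfl
  rw [Finset.sum_congr rfl (fun j _ => this j), Finset.sum_sub_distrib, hsum,
    Finset.sum_const, Finset.card_univ, Fintype.card_fin, nsmul_eq_mul]
  have hk0 : ((k:ℝ)+1) ≠ 0 := (kr_pos k).ne'
  push_cast
  field_simp
  ring

lemma Tsub_ne {u : Fin (k+1) → ℝ} (hsum : ∑ j, u j = 1) (hz : ∃ j, u j = 0) :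
    TmapF k (u - bvec k) ≠ (0 : Fin k → ℝ) := by
  intro h
  have h2 := TmapF_eq_zero (sub_bvec_sum hsum) h
  obtain ⟨j, hj⟩ := hz
  have h3 := congrFun h2 j
  have h4 : (u - bvec k) j = u j - ((k:ℝ)+1)⁻¹ := rfl
  rw [h4, hj] at h3
  have h5 : ((0:Fin (k+1) → ℝ)) j = 0 := rfl
  rw [h5] at h3
  have := kr_pos k
  have h6 : ((k:ℝ)+1)⁻¹ > 0 := by positivity
  linarith

lemma norm_Tsub_pos {u : Fin (k+1) → ℝ} (hsum : ∑ j, u j = 1) (hz : ∃ j, u j = 0) :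
    0 < ‖toE k (TmapF k (u - bvec k))‖ := by
  rw [norm_pos_iff]
  exact fun h => Tsub_ne hsum hz (toE_eq_zero h)

lemma PhiF_norm {u : Fin (k+1) → ℝ} (hsum : ∑ j, u j = 1) (hz : ∃ j, u j = 0) :
    ‖PhiF k u‖ = 1 := by
  have hN := norm_Tsub_pos (k := k) hsum hz
  rw [PhiF, norm_smul, Real.norm_eq_abs, abs_inv, abs_norm]
  exact inv_mul_cancel₀ hN.ne'

-- Properties of PsiF for y ≠ 0
lemma SmapF_ne_zero {y : Fin k → ℝ} (hy : y ≠ 0) : SmapF k y ≠ 0 := by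
  intro h
  apply hy
  rw [← TmapF_SmapF (k := k) y, h, TmapF_zero]

lemma Mval_SmapF_pos {y : Fin k → ℝ} (hy : y ≠ 0) : 0 < Mval (SmapF k y) :=
  Mval_pos (sum_SmapF y) (SmapF_ne_zero hy)

lemma PsiF_eq {y : Fin k → ℝ} (hy : y ≠ 0) (j : Fin (k+1)) :
    PsiF k y j = (Mval (SmapF k y) + SmapF k y j) / (((k:ℝ)+1) * Mval (SmapF k y)) := by
  have hM := Mval_SmapF_pos hy
  have hk0 : ((k:ℝ)+1) ≠ 0 := (kr_pos k).ne'
  rw [PsiF]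
  field_simp

lemma PsiF_nonneg {y : Fin k → ℝ} (hy : y ≠ 0) (j : Fin (k+1)) : 0 ≤ PsiF k y j := by
  rw [PsiF_eq hy j]
  have hM := Mval_SmapF_pos hy
  have h1 := le_Mval (SmapF k y) j
  have := kr_pos k
  apply div_nonneg <;> nlinarith

lemma PsiF_sum {y : Fin k → ℝ} (hy : y ≠ 0) : ∑ j, PsiF k y j = 1 := by
  have hM := Mval_SmapF_pos hy
  have hk0 : ((k:ℝ)+1) ≠ 0 := (kr_pos k).ne'
  unfold PsiF
  rw [Finset.sum_add_distrib, Finset.sum_const, Finset.card_univ, Fintype.card_fin,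
    nsmul_eq_mul, ← Finset.sum_div, sum_SmapF]
  push_cast
  field_simp
  ring

lemma PsiF_exists_zero {y : Fin k → ℝ} (hy : y ≠ 0) : ∃ j, PsiF k y j = 0 := by
  obtain ⟨j, hj⟩ := exists_Mval (SmapF k y)
  refine ⟨j, ?_⟩
  rw [PsiF_eq hy j, hj]
  simp

lemma PsiF_PhiF {u : Fin (k+1) → ℝ} (hpos : ∀ j, 0 ≤ u j) (hsum : ∑ j, u j = 1)
    (hz : ∃ j, u j = 0) : PsiF k (PhiF k u) = u := by
  set N := ‖toE k (TmapF k (u - bvec k))‖ with hNdef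
  have hN : 0 < N := norm_Tsub_pos hsum hz
  have hphi : (PhiF k u : Fin k → ℝ) = N⁻¹ • TmapF k (u - bvec k) := rfl
  have hS : SmapF k (PhiF k u) = N⁻¹ • (u - bvec k) := by
    rw [hphi, SmapF_smul, SmapF_TmapF _ (sub_bvec_sum hsum)]
  have hM : Mval (SmapF k (PhiF k u)) = N⁻¹ * ((k:ℝ)+1)⁻¹ := by
    rw [hS, Mval_smul (by positivity) _, Mval_sub_bvec hpos hz]
  funext j
  rw [PsiF, hM, hS]
  have hval : (N⁻¹ • (u - bvec k)) j = N⁻¹ * (u j - ((k:ℝ)+1)⁻¹) := rfl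
  rw [hval]
  have hk0 : ((k:ℝ)+1) ≠ 0 := (kr_pos k).ne'
  field_simp
  ring

lemma PhiF_PsiF {y : EuclideanSpace ℝ (Fin k)} (hy : ‖y‖ = 1) :
    PhiF k (PsiF k y) = y := by
  have hy0 : (y : Fin k → ℝ) ≠ 0 := by
    intro h
    rw [show y = 0 from (WithLp.ofLp_eq_zero 2).mp h] at hy
    simp at hy
  set w := SmapF k (y : Fin k → ℝ) with hw
  have hM : 0 < Mval w := Mval_SmapF_pos hy0
  have hk0 : (0:ℝ) < (k:ℝ)+1 := kr_pos k
  set c : ℝ := (((k:ℝ)+1) * Mval w)⁻¹ with hc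
  have hcpos : 0 < c := by positivity
  have hsub : PsiF k y - bvec k = c • w := by
    funext j
    show ((k:ℝ)+1)⁻¹ + SmapF k y j / (((k:ℝ)+1) * Mval (SmapF k y)) - ((k:ℝ)+1)⁻¹
      = c * w j
    rw [add_sub_cancel_left, div_eq_inv_mul]
  have hT : TmapF k (PsiF k y - bvec k) = c • (y : Fin k → ℝ) := by
    rw [hsub, TmapF_smul, TmapF_SmapF]
  have hTy : toE k (TmapF k (PsiF k y - bvec k)) = c • y := by
    rw [hT]; rfl
  rw [PhiF, hTy, norm_smul, Real.norm_eq_abs, abs_of_pos hcpos, smul_smul]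
  have h1 : (c * ‖y‖)⁻¹ * c = 1 := by
    rw [hy, mul_one, inv_mul_cancel₀ hcpos.ne']
  rw [h1, one_smul]

end PhiPsi

section Main

variable {k : ℕ}

lemma real_bd_exists_zero (u : Realization (BdFace (k+1))) : ∃ j, u.1 j = 0 := by
  obtain ⟨σ, ⟨x, hx⟩, hsupp⟩ := u.2.2.2
  exact ⟨x, by_contra fun h => hx (hsupp x h)⟩

lemma mem_real_bd {u : Fin (k+1) → ℝ} (hpos : ∀ j, 0 ≤ u j) (hsum : ∑ j, u j = 1)
    (hz : ∃ j, u j = 0) :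
    (∀ v, 0 ≤ u v) ∧ (∑ᶠ v, u v) = 1 ∧
      ∃ σ : Finset (Fin (k+1)), BdFace (k+1) σ ∧ ∀ v, u v ≠ 0 → v ∈ σ := by
  refine ⟨hpos, by rw [finsum_eq_sum_of_fintype]; exact hsum, ?_⟩
  obtain ⟨j, hj⟩ := hz
  exact ⟨Finset.univ.erase j, ⟨j, Finset.notMem_erase j _⟩,
    fun v hv => Finset.mem_erase.mpr ⟨fun h => hv (h ▸ hj), Finset.mem_univ v⟩⟩

noncomputable def bdEquiv (k : ℕ) :
    Realization (BdFace (k+1)) ≃ Metric.sphere (0 : EuclideanSpace ℝ (Fin k)) 1 where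
  toFun u := ⟨PhiF k u.1, by
    rw [mem_sphere_zero_iff_norm]
    exact PhiF_norm (sum_of_real u) (real_bd_exists_zero u)⟩
  invFun y := ⟨PsiF k y.1, by
    have hy : ‖y.1‖ = 1 := mem_sphere_zero_iff_norm.mp y.2
    have hy0 : (y.1 : Fin k → ℝ) ≠ 0 := by
      intro h
      rw [show (y.1 : EuclideanSpace ℝ (Fin k)) = 0 from (WithLp.ofLp_eq_zero 2).mp h] at hy
      simp at hy
    exact mem_real_bd (PsiF_nonneg hy0) (PsiF_sum hy0) (PsiF_exists_zero hy0)⟩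
  left_inv u := Subtype.ext (PsiF_PhiF u.2.1 (sum_of_real u) (real_bd_exists_zero u))
  right_inv y := Subtype.ext (PhiF_PsiF (mem_sphere_zero_iff_norm.mp y.2))

lemma continuous_PhiF_real :
    Continuous (fun u : Realization (BdFace (k+1)) => PhiF k u.1) := by
  have hg : Continuous (fun u : Realization (BdFace (k+1)) =>
      toE k (TmapF k (u.1 - bvec k))) := by
    apply (PiLp.continuous_toLp (p := 2) (β := fun _ : Fin k => ℝ)).comp
    refine continuous_pi fun i => ?_
    exact (((continuous_apply (Fin.castSucc i)).comp continuous_subtype_val).sub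
      continuous_const).sub
      (((continuous_apply (Fin.last k)).comp continuous_subtype_val).sub continuous_const)
  exact Continuous.smul (Continuous.inv₀ hg.norm
    (fun u => (norm_Tsub_pos (sum_of_real u) (real_bd_exists_zero u)).ne')) hg

lemma compactSpace_real_bd (k : ℕ) : CompactSpace (Realization (BdFace (k+1))) := by
  have hC : IsCompact {w : Fin (k+1) → ℝ | (∀ v, 0 ≤ w v) ∧ (∑ᶠ v, w v) = 1 ∧
      ∃ σ : Finset (Fin (k+1)), BdFace (k+1) σ ∧ ∀ v, w v ≠ 0 → v ∈ σ} := by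
    have hsumc : Continuous (fun w : Fin (k+1) → ℝ => ∑ᶠ v, w v) := by
      have he : (fun w : Fin (k+1) → ℝ => ∑ᶠ v, w v) = fun w => ∑ v, w v :=
        funext fun w => finsum_eq_sum_of_fintype _
      rw [he]
      exact continuous_finset_sum _ fun v _ => continuous_apply v
    apply IsCompact.of_isClosed_subset (isCompact_Icc (a := (0 : Fin (k+1) → ℝ)) (b := 1))
    · have heq : {w : Fin (k+1) → ℝ | (∀ v, 0 ≤ w v) ∧ (∑ᶠ v, w v) = 1 ∧
          ∃ σ : Finset (Fin (k+1)), BdFace (k+1) σ ∧ ∀ v, w v ≠ 0 → v ∈ σ}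
          = ⋃ σ : Finset (Fin (k+1)), {w | BdFace (k+1) σ ∧ (∀ v, 0 ≤ w v) ∧
            (∑ᶠ v, w v) = 1 ∧ ∀ v, w v ≠ 0 → v ∈ σ} := by
        ext w
        simp only [Set.mem_setOf_eq, Set.mem_iUnion]
        tauto
      rw [heq]
      apply isClosed_iUnion_of_finite
      intro σ
      by_cases hb : BdFace (k+1) σ
      · have heq2 : {w : Fin (k+1) → ℝ | BdFace (k+1) σ ∧ (∀ v, 0 ≤ w v) ∧
            (∑ᶠ v, w v) = 1 ∧ ∀ v, w v ≠ 0 → v ∈ σ}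
            = {w | ∀ v, 0 ≤ w v} ∩ ({w | (∑ᶠ v, w v) = 1} ∩
              ⋂ v, {w | w v ≠ 0 → v ∈ σ}) := by
          ext w
          simp only [Set.mem_setOf_eq, Set.mem_inter_iff, Set.mem_iInter, hb, true_and]
        rw [heq2]
        refine IsClosed.inter ?_ (IsClosed.inter ?_ ?_)
        · rw [show {w : Fin (k+1) → ℝ | ∀ v, 0 ≤ w v}
              = ⋂ v, {w : Fin (k+1) → ℝ | 0 ≤ w v} from Set.setOf_forall _]
          exact isClosed_iInter fun v => isClosed_le continuous_const (continuous_apply v)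
        · exact isClosed_eq hsumc continuous_const
        · refine isClosed_iInter fun v => ?_
          by_cases hv : v ∈ σ
          · have : {w : Fin (k+1) → ℝ | w v ≠ 0 → v ∈ σ} = Set.univ := by
              ext w; simp [hv]
            rw [this]; exact isClosed_univ
          · have : {w : Fin (k+1) → ℝ | w v ≠ 0 → v ∈ σ} = {w | w v = 0} := by
              ext w; simp [hv]
            rw [this]; exact isClosed_eq (continuous_apply v) continuous_const
      · have : {w : Fin (k+1) → ℝ | BdFace (k+1) σ ∧ (∀ v, 0 ≤ w v) ∧
            (∑ᶠ v, w v) = 1 ∧ ∀ v, w v ≠ 0 → v ∈ σ} = ∅ := by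
          ext w; simp [hb]
        rw [this]; exact isClosed_empty
    · intro w hw
      obtain ⟨hpos, hsum, -⟩ := hw
      rw [finsum_eq_sum_of_fintype] at hsum
      constructor
      · intro v; exact hpos v
      · intro v
        show w v ≤ 1
        rw [← hsum]
        exact Finset.single_le_sum (fun j _ => hpos j) (Finset.mem_univ v)
  exact isCompact_iff_compactSpace.mp hC

noncomputable def bdHomeo (k : ℕ) :
    Realization (BdFace (k+1)) ≃ₜ Metric.sphere (0 : EuclideanSpace ℝ (Fin k)) 1 :=
  haveI := compactSpace_real_bd k
  Continuous.homeoOfEquivCompactToT2 (f := bdEquiv k)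
    (Continuous.subtype_mk continuous_PhiF_real _)

end Main

/-- For `2 ≤ m < n`: the subgraph of `K_m^{K_n}` induced by the constant maps is
isomorphic to `K_m` (constants `⟨x⟩, ⟨y⟩` are adjacent iff `x ≠ y`), the graph
`K_m^{K_n}` folds onto this subgraph (every non-constant vertex `f` has a constant
`⟨x⟩` with `N(f) ⊆ N(⟨x⟩)`), and consequently `𝒩(K_m^{K_n})` is homotopy
equivalent to the boundary of the `(m-1)`-simplex, i.e. to the sphere `S^{m-2}`. -/
theorem nbhd_complex_exp_graph_sphere (n m : ℕ) (hm : 2 ≤ m) (hmn : m < n) :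
    (∀ x y : Fin m, ExpAdj n m (fun _ => x) (fun _ => y) ↔ x ≠ y) ∧
    (∀ f : Fin n → Fin m, (¬ ∃ x, ∀ i, f i = x) →
      ∃ x : Fin m, ∀ g : Fin n → Fin m,
        ExpAdj n m f g → ExpAdj n m (fun _ => x) g) ∧
    Nonempty (ContinuousMap.HomotopyEquiv (Realization (NFace n m))
      (Metric.sphere (0 : EuclideanSpace ℝ (Fin (m - 1))) 1)) := by
  have hn : 2 ≤ n := by omega
  refine ⟨?_, ?_, ?_⟩
  · intro x y
    rw [expAdj_const_left hn]
    constructor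
    · intro h
      exact (h ⟨0, by omega⟩).symm
    · intro h j
      exact h.symm
  · intro f _
    exact ⟨cval hmn f, fun g hg => fold_adj hmn hg⟩
  · obtain ⟨k, rfl⟩ : ∃ k, m = k + 1 := ⟨m - 1, by omega⟩
    exact ⟨(foldHE hmn hn).trans (bdHomeo k).toHomotopyEquiv⟩
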